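/- Let (Ω,ℱ,P) be a probability space, 𝒢 ⊆ ℱ a sub-σ-algebra, and G a linear subspace of L²(ℱ,P) that is stable under multiplication by bounded 𝒢-measurable random variables. Let h ∈ L²(ℱ,P) and suppose w* ∈ G satisfies E[(h − w*)·g] = 0 for all g ∈ G. Then E[(h − w*)·g | 𝒢] = 0 a.s. for all g ∈ G, and w* minimizes E[(h − w)²|𝒢] over w ∈ G: E[(h−w)²|𝒢] = E[(h−w*)²|𝒢] + E[(w−w*)²|𝒢] ≥ E[(h−w*)²|𝒢] a.s. for every w ∈ G. -/

import Mathlib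

open MeasureTheory Filter Topology

private lemma memL2_integrable_mul {Ω : Type*} [MeasurableSpace Ω] {μ : Measure Ω}
    {f g : Ω → ℝ} (hf : MemLp f 2 μ) (hg : MemLp g 2 μ) :
    Integrable (fun ω => f ω * g ω) μ := by
  have h1 := (hf.add hg).integrable_sq
  have h2 := hf.integrable_sq
  have h3 := hg.integrable_sq
  have : (fun ω => f ω * g ω)
      = fun ω => (((f ω + g ω) ^ 2 - f ω ^ 2) - g ω ^ 2) / 2 := by
    funext ω; ring
  rw [this]
  exact ((h1.sub h2).sub h3).div_const 2

/-- **Unconditional orthogonality upgrades to conditional orthogonality and the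
conditional Pythagoras identity** (localization argument in Theorem 3.9). Let `G` be a
linear subspace of `L²` stable under multiplication by bounded `𝒢`-measurable random
variables, and let `w* ∈ G` satisfy `E[(h − w*)g] = 0` for all `g ∈ G`. Then
`E[(h−w*)g|𝒢] = 0` a.s. for every `g ∈ G`, and `w*` minimizes `E[(h−w)²|𝒢]` over
`w ∈ G` via `E[(h−w)²|𝒢] = E[(h−w*)²|𝒢] + E[(w−w*)²|𝒢]`. -/
theorem conditional_projection_localization {Ω : Type*} [m : MeasurableSpace Ω]
    (μ : Measure Ω) [IsProbabilityMeasure μ] (G : MeasurableSpace Ω) (hG : G ≤ m)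
    (Gsub : Submodule ℝ (Ω → ℝ)) (hL2 : ∀ g ∈ Gsub, MemLp g 2 μ)
    (hstable : ∀ g ∈ Gsub, ∀ a : Ω → ℝ, Measurable[G] a → (∃ c : ℝ, ∀ ω, |a ω| ≤ c) →
      (fun ω => a ω * g ω) ∈ Gsub)
    (h : Ω → ℝ) (hh : MemLp h 2 μ)
    (wstar : Ω → ℝ) (hws : wstar ∈ Gsub)
    (hfoc : ∀ g ∈ Gsub, ∫ ω, (h ω - wstar ω) * g ω ∂μ = 0) :
    (∀ g ∈ Gsub, MeasureTheory.condExp G μ (fun ω => (h ω - wstar ω) * g ω) =ᵐ[μ] 0) ∧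
    (∀ w ∈ Gsub,
      MeasureTheory.condExp G μ (fun ω => (h ω - w ω) ^ 2) =ᵐ[μ]
        fun ω => (MeasureTheory.condExp G μ fun ω' => (h ω' - wstar ω') ^ 2) ω +
          (MeasureTheory.condExp G μ fun ω' => (w ω' - wstar ω') ^ 2) ω) ∧
    (∀ w ∈ Gsub, ∀ᵐ ω ∂μ,
      (MeasureTheory.condExp G μ fun ω' => (h ω' - wstar ω') ^ 2) ω ≤
        (MeasureTheory.condExp G μ fun ω' => (h ω' - w ω') ^ 2) ω) := by
  letI : MeasurableSpace Ω := m
  have hd : MemLp (fun ω => h ω - wstar ω) 2 μ := hh.sub (hL2 wstar hws)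
  haveI : SigmaFinite (μ.trim hG) := inferInstance
  -- Part 1: conditional orthogonality
  have part1 : ∀ g ∈ Gsub,
      MeasureTheory.condExp G μ (fun ω => (h ω - wstar ω) * g ω) =ᵐ[μ] 0 := by
    intro g hg
    have hint : Integrable (fun ω => (h ω - wstar ω) * g ω) μ :=
      memL2_integrable_mul hd (hL2 g hg)
    have key : (0 : Ω → ℝ) =ᵐ[μ]
        MeasureTheory.condExp G μ (fun ω => (h ω - wstar ω) * g ω) := by
      refine ae_eq_condExp_of_forall_setIntegral_eq hG hint
        (fun s _ _ => (integrable_zero Ω ℝ μ).integrableOn) (fun s hs _ => ?_)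
        (StronglyMeasurable.aestronglyMeasurable
          (@stronglyMeasurable_zero Ω ℝ G _ _))
      have hsm : @MeasurableSet Ω m s := hG s hs
      have ha : Measurable[G] (s.indicator (fun _ => (1 : ℝ))) :=
        Measurable.indicator (measurable_const : Measurable[G] fun _ : Ω => (1 : ℝ)) hs
      have hb : ∃ c : ℝ, ∀ ω, |s.indicator (fun _ => (1 : ℝ)) ω| ≤ c := by
        refine ⟨1, fun ω => ?_⟩
        by_cases hω : ω ∈ s <;> simp [Set.indicator, hω]
      have hmem := hstable g hg _ ha hb
      have hz := hfoc _ hmem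
      have heq : ∫ x in s, (h x - wstar x) * g x ∂μ
          = ∫ ω, (h ω - wstar ω) * (s.indicator (fun _ => (1 : ℝ)) ω * g ω) ∂μ := by
        rw [← integral_indicator hsm]
        congr 1
        funext ω
        by_cases hω : ω ∈ s <;> simp [Set.indicator, hω]
      simp [heq, hz]
    exact key.symm
  -- Part 2: conditional Pythagoras
  have part2 : ∀ w ∈ Gsub,
      MeasureTheory.condExp G μ (fun ω => (h ω - w ω) ^ 2) =ᵐ[μ]
        fun ω => (MeasureTheory.condExp G μ fun ω' => (h ω' - wstar ω') ^ 2) ω +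
          (MeasureTheory.condExp G μ fun ω' => (w ω' - wstar ω') ^ 2) ω := by
    intro w hw
    have hu : (fun ω => w ω - wstar ω) ∈ Gsub := Gsub.sub_mem hw hws
    have huL2 : MemLp (fun ω => w ω - wstar ω) 2 μ := (hL2 w hw).sub (hL2 wstar hws)
    have hA : Integrable (fun ω => (h ω - wstar ω) ^ 2) μ := hd.integrable_sq
    have hB : Integrable (fun ω => (w ω - wstar ω) ^ 2) μ := huL2.integrable_sq
    have hC : Integrable (fun ω => (h ω - wstar ω) * (w ω - wstar ω)) μ :=
      memL2_integrable_mul hd huL2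
    have hcross := part1 _ hu
    have e1 : (fun ω => (h ω - w ω) ^ 2)
        = ((fun ω => (h ω - wstar ω) ^ 2) + (fun ω => (w ω - wstar ω) ^ 2))
            - (2 : ℝ) • (fun ω => (h ω - wstar ω) * (w ω - wstar ω)) := by
      funext ω
      simp only [Pi.sub_apply, Pi.add_apply, Pi.smul_apply, smul_eq_mul]
      ring
    rw [e1]
    have hadd := condExp_add (m := G) (μ := μ) hA hB
    have hsub := condExp_sub (m := G) (μ := μ) (hA.add hB) (hC.smul (2 : ℝ))
    have hsmul := condExp_smul (m := G) (μ := μ) (2 : ℝ)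
      (fun ω => (h ω - wstar ω) * (w ω - wstar ω))
    filter_upwards [hadd, hsub, hsmul, hcross] with ω h1 h2 h3 h4
    simp only [Pi.sub_apply, Pi.add_apply, Pi.smul_apply, Pi.zero_apply,
      smul_eq_mul] at h1 h2 h3 h4 ⊢
    rw [h2, h1, h3, h4]
    ring
  refine ⟨part1, part2, fun w hw => ?_⟩
  -- Part 3: minimization
  have hnn : 0 ≤ᵐ[μ] MeasureTheory.condExp G μ (fun ω' => (w ω' - wstar ω') ^ 2) :=
    condExp_nonneg (Eventually.of_forall fun ω => sq_nonneg _)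
  filter_upwards [part2 w hw, hnn] with ω h1 h2
  rw [h1]
  simp only [Pi.zero_apply] at h2
  linarith
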